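/- Let ν > 0 and α > 1, and define u : ℝ × [0,∞) → ℝ by u(x,t) = 2νπ e^{−νπ²t} sin(πx) / (α + e^{−νπ²t} cos(πx)). Then the denominator satisfies α + e^{−νπ²t} cos(πx) ≥ α − 1 > 0 for all x ∈ ℝ and t ≥ 0, u satisfies Burgers' equation ∂u/∂t = ν ∂²u/∂x² − u ∂u/∂x at every (x,t) with t ≥ 0, and it satisfies the initial condition u(x,0) = 2νπ sin(πx)/(α + cos(πx)) and the Dirichlet boundary conditions u(0,t) = u(1,t) = 0 for all t ≥ 0. -/

import Mathlib

/- STATEMENT 12: the analytical solution of Burgers' equation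
   u(x,t) = 2νπ e^{−νπ²t} sin(πx) / (α + e^{−νπ²t} cos(πx)), ν > 0, α > 1:
   denominator bound, the PDE u_t = ν u_xx − u u_x for t ≥ 0 (time derivative
   one-sided at t = 0, i.e. within [0,∞)), initial and boundary conditions. -/


noncomputable section


private lemma hasDerivAt_sin_pi (x : ℝ) :
    HasDerivAt (fun y : ℝ => Real.sin (Real.pi * y)) (Real.cos (Real.pi * x) * Real.pi) x := by
  exact ((Real.hasDerivAt_sin (Real.pi * x)).comp x ((hasDerivAt_id' x).const_mul Real.pi)).congr_deriv (by ring)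

private lemma hasDerivAt_cos_pi (x : ℝ) :
    HasDerivAt (fun y : ℝ => Real.cos (Real.pi * y)) (-Real.sin (Real.pi * x) * Real.pi) x := by
  exact ((Real.hasDerivAt_cos (Real.pi * x)).comp x ((hasDerivAt_id' x).const_mul Real.pi)).congr_deriv (by ring)

private lemma denom_ne (α E : ℝ) (hα : 1 < α) (hE : 0 < E) (hE1 : E ≤ 1) (x : ℝ) :
    α + E * Real.cos (Real.pi * x) ≠ 0 := by
  have h1 := Real.neg_one_le_cos (Real.pi * x)
  have h2 := Real.cos_le_one (Real.pi * x)
  nlinarith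

private lemma hasDerivAt_ux (ν α E : ℝ) (hα : 1 < α) (hE : 0 < E) (hE1 : E ≤ 1) (x : ℝ) :
    HasDerivAt (fun y : ℝ => 2 * ν * Real.pi * E * Real.sin (Real.pi * y) /
        (α + E * Real.cos (Real.pi * y)))
      (2 * ν * Real.pi ^ 2 * E * (α * Real.cos (Real.pi * x) + E) /
        (α + E * Real.cos (Real.pi * x)) ^ 2) x := by
  have hD := denom_ne α E hα hE hE1 x
  have hN := (hasDerivAt_sin_pi x).const_mul (2 * ν * Real.pi * E)
  have hDen := ((hasDerivAt_cos_pi x).const_mul E).const_add α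
  have hq := hN.div hDen hD
  refine hq.congr_deriv ?_
  have hsc := Real.sin_sq_add_cos_sq (Real.pi * x)
  congr 1
  linear_combination (2*ν*Real.pi^2*E^2) * hsc

example : True := trivial
private lemma hasDerivAt_uxx (ν α E : ℝ) (hα : 1 < α) (hE : 0 < E) (hE1 : E ≤ 1) (x : ℝ) :
    HasDerivAt (fun y : ℝ => 2 * ν * Real.pi ^ 2 * E * (α * Real.cos (Real.pi * y) + E) /
        (α + E * Real.cos (Real.pi * y)) ^ 2)
      (2 * ν * Real.pi ^ 3 * E * Real.sin (Real.pi * x) *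
          (-α ^ 2 + α * E * Real.cos (Real.pi * x) + 2 * E ^ 2) /
        (α + E * Real.cos (Real.pi * x)) ^ 3) x := by
  have hD := denom_ne α E hα hE hE1 x
  have hP := (((hasDerivAt_cos_pi x).const_mul α).add_const E).const_mul (2 * ν * Real.pi ^ 2 * E)
  have hQ := (((hasDerivAt_cos_pi x).const_mul E).const_add α).pow 2
  have hq := hP.div hQ (pow_ne_zero 2 hD)
  refine hq.congr_deriv ?_
  simp only [Pi.pow_apply, Nat.cast_ofNat, Nat.reduceSub, pow_one]
  field_simp
  ring

private lemma exp_le_one' (ν t : ℝ) (hν : 0 < ν) (ht : 0 ≤ t) :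
    Real.exp (-ν * Real.pi ^ 2 * t) ≤ 1 := by
  rw [Real.exp_le_one_iff]
  nlinarith [mul_nonneg (mul_nonneg hν.le (sq_nonneg Real.pi)) ht]

set_option maxHeartbeats 1000000 in
private lemma hasDerivAt_ut (ν α x : ℝ) (hα : 1 < α) (hν : 0 < ν) (t : ℝ) (ht : 0 ≤ t) :
    HasDerivAt (fun τ : ℝ => 2 * ν * Real.pi * Real.exp (-ν * Real.pi ^ 2 * τ) *
        Real.sin (Real.pi * x) / (α + Real.exp (-ν * Real.pi ^ 2 * τ) * Real.cos (Real.pi * x)))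
      (-(2 * ν ^ 2 * Real.pi ^ 3 * α) * Real.exp (-ν * Real.pi ^ 2 * t) * Real.sin (Real.pi * x) /
        (α + Real.exp (-ν * Real.pi ^ 2 * t) * Real.cos (Real.pi * x)) ^ 2) t := by
  have hE : (0:ℝ) < Real.exp (-ν * Real.pi ^ 2 * t) := Real.exp_pos _
  have hD := denom_ne α _ hα hE (exp_le_one' ν t hν ht) x
  have he : HasDerivAt (fun τ : ℝ => Real.exp (-ν * Real.pi ^ 2 * τ))
      (Real.exp (-ν * Real.pi ^ 2 * t) * (-ν * Real.pi ^ 2)) t := by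
    have h0 : HasDerivAt (fun τ : ℝ => -ν * Real.pi ^ 2 * τ) (-ν * Real.pi ^ 2) t := by
      exact ((hasDerivAt_id' t).const_mul (-ν * Real.pi ^ 2)).congr_deriv (mul_one _)
    exact h0.exp
  have hN := (he.const_mul (2 * ν * Real.pi)).mul_const (Real.sin (Real.pi * x))
  have hDen := (he.mul_const (Real.cos (Real.pi * x))).const_add α
  have hq := hN.div hDen hD
  refine hq.congr_deriv ?_
  field_simp
  ring
/-- `u(x,t) = 2νπ e^{−νπ²t} sin(πx) / (α + e^{−νπ²t} cos(πx))`. -/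
def u (ν α x t : ℝ) : ℝ :=
  2 * ν * Real.pi * Real.exp (-ν * Real.pi ^ 2 * t) * Real.sin (Real.pi * x) /
    (α + Real.exp (-ν * Real.pi ^ 2 * t) * Real.cos (Real.pi * x))

theorem burgers_analytic_solution (ν α : ℝ) (hν : 0 < ν) (hα : 1 < α) :
    (∀ x t : ℝ, 0 ≤ t →
        α - 1 ≤ α + Real.exp (-ν * Real.pi ^ 2 * t) * Real.cos (Real.pi * x)) ∧
    0 < α - 1 ∧
    (∀ x t : ℝ, 0 ≤ t →
        derivWithin (fun s => u ν α x s) (Set.Ici 0) t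
          = ν * iteratedDeriv 2 (fun s => u ν α s t) x
            - u ν α x t * deriv (fun s => u ν α s t) x) ∧
    (∀ x : ℝ,
        u ν α x 0 = 2 * ν * Real.pi * Real.sin (Real.pi * x) /
          (α + Real.cos (Real.pi * x))) ∧
    (∀ t : ℝ, 0 ≤ t → u ν α 0 t = 0 ∧ u ν α 1 t = 0) := by
  refine ⟨?_, by linarith, ?_, ?_, ?_⟩
  · intro x t ht
    have hE : (0:ℝ) < Real.exp (-ν * Real.pi ^ 2 * t) := Real.exp_pos _
    have hE1 := exp_le_one' ν t hν ht
    have hc := Real.neg_one_le_cos (Real.pi * x)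
    nlinarith
  · intro x t ht
    have hE : (0:ℝ) < Real.exp (-ν * Real.pi ^ 2 * t) := Real.exp_pos _
    have hE1 := exp_le_one' ν t hν ht
    have hD := denom_ne α _ hα hE hE1 x
    have h1 : derivWithin (fun s => u ν α x s) (Set.Ici 0) t
        = -(2 * ν ^ 2 * Real.pi ^ 3 * α) * Real.exp (-ν * Real.pi ^ 2 * t) *
            Real.sin (Real.pi * x) /
          (α + Real.exp (-ν * Real.pi ^ 2 * t) * Real.cos (Real.pi * x)) ^ 2 := by
      have := (hasDerivAt_ut ν α x hα hν t ht).hasDerivWithinAt.derivWithin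
        (uniqueDiffOn_Ici 0 t ht)
      simpa [u] using this
    have h2 : deriv (fun s => u ν α s t) x
        = 2 * ν * Real.pi ^ 2 * Real.exp (-ν * Real.pi ^ 2 * t) *
            (α * Real.cos (Real.pi * x) + Real.exp (-ν * Real.pi ^ 2 * t)) /
          (α + Real.exp (-ν * Real.pi ^ 2 * t) * Real.cos (Real.pi * x)) ^ 2 := by
      have := (hasDerivAt_ux ν α _ hα hE hE1 x).deriv
      simp only [u]
      exact this
    have hderiv : deriv (fun s => u ν α s t)
        = fun y => 2 * ν * Real.pi ^ 2 * Real.exp (-ν * Real.pi ^ 2 * t) *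
            (α * Real.cos (Real.pi * y) + Real.exp (-ν * Real.pi ^ 2 * t)) /
          (α + Real.exp (-ν * Real.pi ^ 2 * t) * Real.cos (Real.pi * y)) ^ 2 := by
      funext y
      have := (hasDerivAt_ux ν α _ hα hE hE1 y).deriv
      simp only [u]
      exact this
    have h3 : iteratedDeriv 2 (fun s => u ν α s t) x
        = 2 * ν * Real.pi ^ 3 * Real.exp (-ν * Real.pi ^ 2 * t) * Real.sin (Real.pi * x) *
            (-α ^ 2 + α * Real.exp (-ν * Real.pi ^ 2 * t) * Real.cos (Real.pi * x) +
              2 * Real.exp (-ν * Real.pi ^ 2 * t) ^ 2) /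
          (α + Real.exp (-ν * Real.pi ^ 2 * t) * Real.cos (Real.pi * x)) ^ 3 := by
      rw [iteratedDeriv_succ, iteratedDeriv_one, hderiv]
      exact (hasDerivAt_uxx ν α _ hα hE hE1 x).deriv
    rw [h1, h2, h3]
    simp only [u]
    generalize Real.exp (-ν * Real.pi ^ 2 * t) = E at hD ⊢
    generalize Real.cos (Real.pi * x) = c at hD ⊢
    generalize Real.sin (Real.pi * x) = s
    field_simp [hD]
    ring
  · intro x
    simp [u]
  · intro t ht
    constructor <;> simp [u, Real.sin_pi]
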